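/- arXiv:1008.3052 — 3 statements merged into one kernel-verified Lean document; each statement's English description precedes it below -/
import Mathlib

section
/- Let d ≥ 1 and K ≥ 1, let U_i : ℝ → ℝ (i = 1,…,K) be continuously differentiable functions, and define the Maxwellian M : (ℝ^d)^K → (0,∞) by M(q) = exp(−∑_{i=1}^K U_i(|q_i|²/2)) for q = (q₁,…,q_K). Let B be a real d×d matrix with trace zero, and let φ : (ℝ^d)^K → ℝ be continuously differentiable with compact support. Then ∫_{(ℝ^d)^K} M(q) ∑_{i=1}^K ⟨B q_i, ∇_{q_i} φ(q)⟩ dq = ∫_{(ℝ^d)^K} M(q) φ(q) ∑_{i=1}^K U_i′(|q_i|²/2) ⟨q_i, B q_i⟩ dq. -/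
open MeasureTheory

noncomputable def projE (d K : ℕ) (i : Fin K) (j : Fin d) :
    (Fin K → Fin d → ℝ) →L[ℝ] ℝ :=
  (ContinuousLinearMap.proj (R := ℝ) (φ := fun _ : Fin d => ℝ) j).comp
    (ContinuousLinearMap.proj (R := ℝ) (φ := fun _ : Fin K => Fin d → ℝ) i)

@[simp] lemma projE_apply {d K : ℕ} (i : Fin K) (j : Fin d) (v : Fin K → Fin d → ℝ) :
    projE d K i j v = v i j := rfl

lemma hasFDerivAt_sblock {d K : ℕ} (i : Fin K) (q : Fin K → Fin d → ℝ) :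
    HasFDerivAt (fun q : Fin K → Fin d → ℝ => (∑ j, q i j ^ 2) / 2)
      (∑ j, q i j • projE d K i j) q := by
  have h1 : ∀ j : Fin d, HasFDerivAt (fun q : Fin K → Fin d → ℝ => q i j ^ 2)
      (q i j • projE d K i j + q i j • projE d K i j) q := by
    intro j
    have := ((projE d K i j).hasFDerivAt (x := q)).mul ((projE d K i j).hasFDerivAt (x := q))
    simp only [sq]; exact this
  have h2 := (HasFDerivAt.fun_sum (fun j (_ : j ∈ Finset.univ) => h1 j)).const_mul (1/2 : ℝ)
  have heq : (fun q : Fin K → Fin d → ℝ => (∑ j, q i j ^ 2) / 2)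
      = fun q => (1/2 : ℝ) * ∑ j, q i j ^ 2 := by funext q; ring
  rw [heq]
  refine h2.congr_fderiv ?_
  ext v
  simp [Finset.mul_sum, Finset.sum_apply]
  congr 1; ext j; ring

lemma hasFDerivAt_maxw {d K : ℕ} (U : Fin K → ℝ → ℝ) (hU : ∀ i, ContDiff ℝ 1 (U i))
    (q : Fin K → Fin d → ℝ) :
    HasFDerivAt (fun q : Fin K → Fin d → ℝ => Real.exp (-∑ i, U i ((∑ j, q i j ^ 2) / 2)))
      (Real.exp (-∑ i, U i ((∑ j, q i j ^ 2) / 2)) •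
        (-∑ i, deriv (U i) ((∑ j, q i j ^ 2) / 2) • ∑ j, q i j • projE d K i j)) q := by
  have hN : HasFDerivAt (fun q : Fin K → Fin d → ℝ => -∑ i, U i ((∑ j, q i j ^ 2) / 2))
      (-∑ i, deriv (U i) ((∑ j, q i j ^ 2) / 2) • ∑ j, q i j • projE d K i j) q := by
    apply HasFDerivAt.neg
    apply HasFDerivAt.fun_sum
    intro i _
    exact (((hU i).differentiable one_ne_zero _).hasDerivAt).comp_hasFDerivAt q
      (hasFDerivAt_sblock i q)
  exact (Real.hasDerivAt_exp _).comp_hasFDerivAt q hN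

noncomputable def eb (d K : ℕ) (i : Fin K) (j : Fin d) : Fin K → Fin d → ℝ :=
  Pi.single i (Pi.single j 1)

lemma clm_eval {d K : ℕ} (c : Fin K → ℝ) (q : Fin K → Fin d → ℝ) (i : Fin K) (j : Fin d) :
    (∑ i', c i' • ∑ j', q i' j' • projE d K i' j') (eb d K i j) = c i * q i j := by
  simp only [eb, ContinuousLinearMap.sum_apply, ContinuousLinearMap.smul_apply, projE_apply,
    smul_eq_mul, Pi.single_apply]
  rw [Finset.sum_eq_single i]
  · simp [Pi.single_apply, mul_ite, Finset.sum_ite_eq]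
  · intro b _ hb; simp [hb]
  · intro h; exact absurd (Finset.mem_univ i) h

lemma fderiv_mcoord_apply {d K : ℕ} (U : Fin K → ℝ → ℝ) (hU : ∀ i, ContDiff ℝ 1 (U i))
    (q : Fin K → Fin d → ℝ) (i : Fin K) (j k : Fin d) :
    fderiv ℝ (fun q : Fin K → Fin d → ℝ =>
        Real.exp (-∑ i', U i' ((∑ j', q i' j' ^ 2) / 2)) * q i k) q (eb d K i j)
      = Real.exp (-∑ i', U i' ((∑ j', q i' j' ^ 2) / 2)) *
          ((if k = j then 1 else 0) - deriv (U i) ((∑ j', q i j' ^ 2) / 2) * q i j * q i k) := by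
  have h : HasFDerivAt (fun q : Fin K → Fin d → ℝ =>
      Real.exp (-∑ i', U i' ((∑ j', q i' j' ^ 2) / 2)) * q i k)
      (Real.exp (-∑ i', U i' ((∑ j', q i' j' ^ 2) / 2)) • projE d K i k +
        q i k • (Real.exp (-∑ i', U i' ((∑ j', q i' j' ^ 2) / 2)) •
          (-∑ i', deriv (U i') ((∑ j', q i' j' ^ 2) / 2) • ∑ j', q i' j' • projE d K i' j'))) q :=
    (hasFDerivAt_maxw U hU q).mul ((projE d K i k).hasFDerivAt)
  rw [h.fderiv]
  have h2 : (∑ i', deriv (U i') ((∑ j', q i' j' ^ 2) / 2) • ∑ j', q i' j' • projE d K i' j')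
      (eb d K i j) = deriv (U i) ((∑ j', q i j' ^ 2) / 2) * q i j := clm_eval _ q i j
  have h3 : eb d K i j i k = if k = j then 1 else 0 := by simp [eb, Pi.single_apply]
  simp only [ContinuousLinearMap.add_apply, ContinuousLinearMap.smul_apply,
    ContinuousLinearMap.neg_apply, h2, projE_apply, smul_eq_mul, h3]
  ring

lemma dir_expand {d K : ℕ} (B : Matrix (Fin d) (Fin d) ℝ) (w : Fin d → ℝ) (i : Fin K) :
    (Pi.single i (B.mulVec w) : Fin K → Fin d → ℝ) = ∑ j, (∑ k, B j k * w k) • eb d K i j := by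
  funext a b
  by_cases h : a = i
  · subst h
    simp [eb, Pi.single_apply, Matrix.mulVec, dotProduct, Finset.sum_apply, mul_ite,
      Finset.sum_ite_eq]
  · simp [eb, Pi.single_apply, h, Finset.sum_apply]

/-- Integration-by-parts formula for trace-free drift terms.  With
`M(q) = exp(-∑ᵢ Uᵢ(|qᵢ|²/2))` the Maxwellian built from `C¹` spring potentials `Uᵢ`,
a trace-free matrix `B`, and a compactly supported `C¹` test function `φ` on
`(ℝ^d)^K`, one has
`∫ M(q) ∑ᵢ ⟨B qᵢ, ∇_{qᵢ} φ(q)⟩ dq = ∫ M(q) φ(q) ∑ᵢ Uᵢ'(|qᵢ|²/2) ⟨qᵢ, B qᵢ⟩ dq`.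
Here `⟨B qᵢ, ∇_{qᵢ} φ(q)⟩` is expressed as the derivative of `φ` at `q` in the
direction of the vector which equals `B qᵢ` in the `i`-th block and `0` elsewhere. -/
theorem maxwellian_integration_by_parts (d K : ℕ) (hd : 1 ≤ d) (hK : 1 ≤ K)
    (U : Fin K → ℝ → ℝ) (hU : ∀ i, ContDiff ℝ 1 (U i))
    (M : (Fin K → Fin d → ℝ) → ℝ)
    (hM : ∀ q : Fin K → Fin d → ℝ,
      M q = Real.exp (-∑ i, U i ((∑ j, (q i j) ^ 2) / 2)))
    (B : Matrix (Fin d) (Fin d) ℝ) (hB : B.trace = 0)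
    (φ : (Fin K → Fin d → ℝ) → ℝ) (hφ : ContDiff ℝ 1 φ)
    (hφsupp : HasCompactSupport φ) :
    (∫ q : Fin K → Fin d → ℝ,
        M q * ∑ i, fderiv ℝ φ q (Pi.single i (B.mulVec (q i)))) =
      ∫ q : Fin K → Fin d → ℝ,
        M q * φ q *
          ∑ i, deriv (U i) ((∑ j, (q i j) ^ 2) / 2) *
            ∑ j, q i j * B.mulVec (q i) j := by
  simp only [hM]
  -- continuity facts
  have contφ : Continuous φ := hφ.continuous
  have contS : ∀ i : Fin K, Continuous (fun q : Fin K → Fin d → ℝ => (∑ j, q i j ^ 2) / 2) :=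
    fun i => (continuous_finset_sum _ fun j _ =>
      ((continuous_apply j).comp (continuous_apply i)).pow 2).div_const 2
  have contMf : Continuous (fun q : Fin K → Fin d → ℝ => Real.exp (-∑ i', U i' ((∑ j', q i' j' ^ 2) / 2))) :=
    Real.continuous_exp.comp
      ((continuous_finset_sum _ fun i _ => (hU i).continuous.comp (contS i)).neg)
  have contdU : ∀ i : Fin K,
      Continuous (fun q : Fin K → Fin d → ℝ => deriv (U i) ((∑ j', q i j' ^ 2) / 2)) :=
    fun i => ((hU i).continuous_deriv le_rfl).comp (contS i)
  have contψ : ∀ (i : Fin K) (j : Fin d),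
      Continuous (fun q : Fin K → Fin d → ℝ => fderiv ℝ φ q (eb d K i j)) :=
    fun i j => (hφ.continuous_fderiv one_ne_zero).clm_apply continuous_const
  have suppψ : ∀ (i : Fin K) (j : Fin d),
      HasCompactSupport (fun q : Fin K → Fin d → ℝ => fderiv ℝ φ q (eb d K i j)) :=
    fun i j => (hφsupp.fderiv (𝕜 := ℝ)).comp_left
      (g := fun L : (Fin K → Fin d → ℝ) →L[ℝ] ℝ => L (eb d K i j)) rfl
  -- integrability facts
  have hintφ : ∀ h : (Fin K → Fin d → ℝ) → ℝ, Continuous h →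
      Integrable (fun q => h q * φ q) :=
    fun h hh => (hh.mul contφ).integrable_of_hasCompactSupport hφsupp.mul_left
  have hintψ : ∀ (h : (Fin K → Fin d → ℝ) → ℝ) (i : Fin K) (j : Fin d), Continuous h →
      Integrable (fun q => h q * fderiv ℝ φ q (eb d K i j)) :=
    fun h i j hh => (hh.mul (contψ i j)).integrable_of_hasCompactSupport (suppψ i j).mul_left
  have contX : ∀ (i : Fin K) (j k : Fin d),
      Continuous (fun q : Fin K → Fin d → ℝ => Real.exp (-∑ i', U i' ((∑ j', q i' j' ^ 2) / 2)) * (deriv (U i) ((∑ j', q i j' ^ 2) / 2) * q i j * q i k)) :=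
    fun i j k => contMf.mul (((contdU i).mul ((continuous_apply j).comp
      (continuous_apply i))).mul ((continuous_apply k).comp (continuous_apply i)))
  have hintX : ∀ (i : Fin K) (j k : Fin d),
      Integrable (fun q : Fin K → Fin d → ℝ => Real.exp (-∑ i', U i' ((∑ j', q i' j' ^ 2) / 2)) * φ q * (deriv (U i) ((∑ j', q i j' ^ 2) / 2) * q i j * q i k)) :=
    fun i j k => by
      have h2 : (fun q : Fin K → Fin d → ℝ => Real.exp (-∑ i', U i' ((∑ j', q i' j' ^ 2) / 2)) * φ q * (deriv (U i) ((∑ j', q i j' ^ 2) / 2) * q i j * q i k))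
          = fun q : Fin K → Fin d → ℝ => (Real.exp (-∑ i', U i' ((∑ j', q i' j' ^ 2) / 2)) * (deriv (U i) ((∑ j', q i j' ^ 2) / 2) * q i j * q i k)) * φ q := by
        funext q; ring
      rw [h2]; exact hintφ _ (contX i j k)
  have hdiffMc : ∀ (i : Fin K) (k : Fin d),
      Differentiable ℝ (fun q : Fin K → Fin d → ℝ => Real.exp (-∑ i', U i' ((∑ j', q i' j' ^ 2) / 2)) * q i k) :=
    fun i k x => ((hasFDerivAt_maxw U hU x).mul ((projE d K i k).hasFDerivAt)).differentiableAt
  -- pointwise expansion of the LHS integrand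
  have hptL : ∀ q : Fin K → Fin d → ℝ,
      (Real.exp (-∑ i', U i' ((∑ j', q i' j' ^ 2) / 2))) * ∑ i, fderiv ℝ φ q (Pi.single i (B.mulVec (q i)))
        = ∑ i, ∑ j, ∑ k, B j k * ((Real.exp (-∑ i', U i' ((∑ j', q i' j' ^ 2) / 2)) * q i k) * fderiv ℝ φ q (eb d K i j)) := by
    intro q
    rw [Finset.mul_sum]
    refine Finset.sum_congr rfl fun i _ => ?_
    rw [dir_expand B (q i) i, map_sum, Finset.mul_sum]
    refine Finset.sum_congr rfl fun j _ => ?_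
    rw [(fderiv ℝ φ q).map_smul, smul_eq_mul, Finset.sum_mul, Finset.mul_sum]
    refine Finset.sum_congr rfl fun k _ => ?_
    ring
  -- integration by parts in each coordinate direction
  have hIBP : ∀ (i : Fin K) (j k : Fin d),
      (∫ q : Fin K → Fin d → ℝ, (Real.exp (-∑ i', U i' ((∑ j', q i' j' ^ 2) / 2)) * q i k) * fderiv ℝ φ q (eb d K i j))
        = (∫ q : Fin K → Fin d → ℝ, Real.exp (-∑ i', U i' ((∑ j', q i' j' ^ 2) / 2)) * φ q * (deriv (U i) ((∑ j', q i j' ^ 2) / 2) * q i j * q i k))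
          - (if k = j then 1 else 0) * ∫ q : Fin K → Fin d → ℝ, Real.exp (-∑ i', U i' ((∑ j', q i' j' ^ 2) / 2)) * φ q := by
    intro i j k
    have hrw : (fun q : Fin K → Fin d → ℝ =>
        fderiv ℝ (fun q : Fin K → Fin d → ℝ => Real.exp (-∑ i', U i' ((∑ j', q i' j' ^ 2) / 2)) * q i k) q (eb d K i j) * φ q)
        = fun q : Fin K → Fin d → ℝ =>
          (if k = j then 1 else 0) * (Real.exp (-∑ i', U i' ((∑ j', q i' j' ^ 2) / 2)) * φ q)
            - Real.exp (-∑ i', U i' ((∑ j', q i' j' ^ 2) / 2)) * φ q * (deriv (U i) ((∑ j', q i j' ^ 2) / 2) * q i j * q i k) := by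
      funext q
      rw [fderiv_mcoord_apply U hU q i j k]
      ring
    rw [integral_mul_fderiv_eq_neg_fderiv_mul_of_integrable ?_ ?_ ?_ (fun x _ => hdiffMc i k x)
      (fun x _ => hφ.differentiable one_ne_zero x)]
    · rw [hrw, integral_sub ((hintφ _ contMf).const_mul _) (hintX i j k),
        integral_const_mul]
      ring
    · rw [hrw]
      exact ((hintφ _ contMf).const_mul _).sub (hintX i j k)
    · exact hintψ _ i j (contMf.mul ((continuous_apply k).comp (continuous_apply i)))
    · exact hintφ _ (contMf.mul ((continuous_apply k).comp (continuous_apply i)))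
  have hintTerm : ∀ (i : Fin K) (j k : Fin d),
      Integrable (fun q : Fin K → Fin d → ℝ =>
        B j k * ((Real.exp (-∑ i', U i' ((∑ j', q i' j' ^ 2) / 2)) * q i k) * fderiv ℝ φ q (eb d K i j))) :=
    fun i j k => (hintψ _ i j (contMf.mul ((continuous_apply k).comp
      (continuous_apply i)))).const_mul _
  -- expand the right-hand side integrand
  have hmv : ∀ (w : Fin d → ℝ) (j : Fin d), B.mulVec w j = ∑ k, B j k * w k :=
    fun w j => by simp [Matrix.mulVec, dotProduct]
  have hptR : ∀ q : Fin K → Fin d → ℝ,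
      Real.exp (-∑ i', U i' ((∑ j', q i' j' ^ 2) / 2)) * φ q * ∑ i, (deriv (U i) ((∑ j', q i j' ^ 2) / 2)) * ∑ j, q i j * B.mulVec (q i) j
        = ∑ i, ∑ j, ∑ k, B j k * (Real.exp (-∑ i', U i' ((∑ j', q i' j' ^ 2) / 2)) * φ q * (deriv (U i) ((∑ j', q i j' ^ 2) / 2) * q i j * q i k)) := by
    intro q
    rw [Finset.mul_sum]
    refine Finset.sum_congr rfl fun i _ => ?_
    simp only [hmv]
    rw [Finset.mul_sum, Finset.mul_sum]
    refine Finset.sum_congr rfl fun j _ => ?_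
    rw [Finset.mul_sum, Finset.mul_sum, Finset.mul_sum]
    refine Finset.sum_congr rfl fun k _ => ?_
    ring
  simp only [hptL, hptR]
  rw [integral_finset_sum _ (fun i _ => integrable_finset_sum _ fun j _ =>
    integrable_finset_sum _ fun k _ => hintTerm i j k)]
  rw [integral_finset_sum _ (fun i _ => integrable_finset_sum _ fun j _ =>
    integrable_finset_sum _ fun k _ => (hintX i j k).const_mul (B j k))]
  have hL : ∀ i : Fin K, (∫ q : Fin K → Fin d → ℝ,
      ∑ j, ∑ k, B j k * ((Real.exp (-∑ i', U i' ((∑ j', q i' j' ^ 2) / 2)) * q i k) * fderiv ℝ φ q (eb d K i j)))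
      = ∑ j, ∑ k, B j k *
        ((∫ q : Fin K → Fin d → ℝ, Real.exp (-∑ i', U i' ((∑ j', q i' j' ^ 2) / 2)) * φ q * (deriv (U i) ((∑ j', q i j' ^ 2) / 2) * q i j * q i k))
          - (if k = j then 1 else 0) * ∫ q : Fin K → Fin d → ℝ, Real.exp (-∑ i', U i' ((∑ j', q i' j' ^ 2) / 2)) * φ q) := by
    intro i
    rw [integral_finset_sum _ (fun j _ => integrable_finset_sum _ fun k _ => hintTerm i j k)]
    refine Finset.sum_congr rfl fun j _ => ?_
    rw [integral_finset_sum _ (fun k _ => hintTerm i j k)]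
    refine Finset.sum_congr rfl fun k _ => ?_
    rw [integral_const_mul, hIBP i j k]
  have hR : ∀ i : Fin K, (∫ q : Fin K → Fin d → ℝ,
      ∑ j, ∑ k, B j k * (Real.exp (-∑ i', U i' ((∑ j', q i' j' ^ 2) / 2)) * φ q * (deriv (U i) ((∑ j', q i j' ^ 2) / 2) * q i j * q i k)))
      = ∑ j, ∑ k, B j k *
        ∫ q : Fin K → Fin d → ℝ, Real.exp (-∑ i', U i' ((∑ j', q i' j' ^ 2) / 2)) * φ q * (deriv (U i) ((∑ j', q i j' ^ 2) / 2) * q i j * q i k) := by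
    intro i
    rw [integral_finset_sum _ (fun j _ => integrable_finset_sum _ fun k _ =>
      (hintX i j k).const_mul (B j k))]
    refine Finset.sum_congr rfl fun j _ => ?_
    rw [integral_finset_sum _ (fun k _ => (hintX i j k).const_mul (B j k))]
    exact Finset.sum_congr rfl fun k _ => integral_const_mul _ _
  simp only [hL, hR, mul_sub, Finset.sum_sub_distrib, sub_eq_self]
  have htr : ∑ j : Fin d, B j j = 0 := by
    simpa [Matrix.trace, Matrix.diag] using hB
  have hinner : (∑ j : Fin d, ∑ k : Fin d,
      B j k * ((if k = j then 1 else 0) *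
        ∫ q : Fin K → Fin d → ℝ, Real.exp (-∑ i', U i' ((∑ j', q i' j' ^ 2) / 2)) * φ q)) = 0 := by
    have hj : ∀ j : Fin d, (∑ k : Fin d, B j k * ((if k = j then 1 else 0) *
        ∫ q : Fin K → Fin d → ℝ, Real.exp (-∑ i', U i' ((∑ j', q i' j' ^ 2) / 2)) * φ q))
        = B j j * ∫ q : Fin K → Fin d → ℝ, Real.exp (-∑ i', U i' ((∑ j', q i' j' ^ 2) / 2)) * φ q := by
      intro j
      rw [Finset.sum_eq_single j]
      · simp
      · intro b _ hb; simp [hb]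
      · intro h; exact absurd (Finset.mem_univ j) h
    simp only [hj]
    rw [← Finset.sum_mul, htr, zero_mul]
  simp only [hinner, Finset.sum_const_zero]
end

section
/- Let δ ∈ (0,1) and L > 1, and define F^L_δ : ℝ → ℝ by F^L_δ(s) = (s² − δ²)/(2δ) + s(log δ − 1) + 1 for s ≤ δ; F^L_δ(s) = s(log s − 1) + 1 for δ ≤ s ≤ L; and F^L_δ(s) = (s² − L²)/(2L) + s(log L − 1) + 1 for s ≥ L. Then for every s ∈ ℝ and every κ ∈ (0,1], F^L_δ(κ·s) ≤ F^L_δ(s) + 1. -/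
open Real Set

lemma ent_hasDeriv {x : ℝ} (hx : x ≠ 0) :
    HasDerivAt (fun s : ℝ => s * (Real.log s - 1)) (Real.log x) x := by
  have h := (hasDerivAt_id x).mul ((Real.hasDerivAt_log hx).sub_const 1)
  have e : Real.log x = 1 * (Real.log x - 1) + id x * x⁻¹ := by
    simp only [id_eq, one_mul, mul_inv_cancel₀ hx]
    ring
  rw [e]
  exact h

lemma ent_contOn {a b : ℝ} (ha : 0 < a) :
    ContinuousOn (fun s : ℝ => s * (Real.log s - 1)) (Set.Icc a b) := by
  apply ContinuousOn.mul continuousOn_id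
  apply ContinuousOn.sub _ continuousOn_const
  exact Real.continuousOn_log.mono (fun x hx => by
    simp only [Set.mem_compl_iff, Set.mem_singleton_iff]
    exact ne_of_gt (lt_of_lt_of_le ha hx.1))

lemma ent_anti {a : ℝ} (ha : 0 < a) (ha1 : a ≤ 1) :
    AntitoneOn (fun s : ℝ => s * (Real.log s - 1)) (Set.Icc a 1) := by
  apply antitoneOn_of_deriv_nonpos (convex_Icc a 1) (ent_contOn ha)
  · intro x hx
    rw [interior_Icc] at hx
    exact (ent_hasDeriv (ne_of_gt (lt_trans ha hx.1))).differentiableAt.differentiableWithinAt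
  · intro x hx
    rw [interior_Icc] at hx
    rw [(ent_hasDeriv (ne_of_gt (lt_trans ha hx.1))).deriv]
    exact le_of_lt (Real.log_neg (lt_trans ha hx.1) hx.2)

lemma ent_mono {b : ℝ} (hb : 1 ≤ b) :
    MonotoneOn (fun s : ℝ => s * (Real.log s - 1)) (Set.Icc 1 b) := by
  apply monotoneOn_of_deriv_nonneg (convex_Icc 1 b) (ent_contOn one_pos)
  · intro x hx
    rw [interior_Icc] at hx
    exact (ent_hasDeriv (ne_of_gt (lt_trans one_pos hx.1))).differentiableAt.differentiableWithinAt
  · intro x hx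
    rw [interior_Icc] at hx
    rw [(ent_hasDeriv (ne_of_gt (lt_trans one_pos hx.1))).deriv]
    exact le_of_lt (Real.log_pos hx.1)

/-- For `δ ∈ (0,1)` and `L > 1`, the convex regularization `F^L_δ` of the entropy
function (quadratic below `δ`, equal to `s (log s - 1) + 1` on `[δ, L]`, and quadratic
above `L`) satisfies `F^L_δ(κ s) ≤ F^L_δ(s) + 1` for every `s ∈ ℝ` and `κ ∈ (0, 1]`. -/
theorem regularized_entropy_scaling (δ L : ℝ) (hδ0 : 0 < δ) (hδ1 : δ < 1) (hL : 1 < L)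
    (F : ℝ → ℝ)
    (hF : ∀ s : ℝ, F s =
      if s ≤ δ then (s ^ 2 - δ ^ 2) / (2 * δ) + s * (Real.log δ - 1) + 1
      else if s ≤ L then s * (Real.log s - 1) + 1
      else (s ^ 2 - L ^ 2) / (2 * L) + s * (Real.log L - 1) + 1)
    (s κ : ℝ) (hκ0 : 0 < κ) (hκ1 : κ ≤ 1) :
    F (κ * s) ≤ F s + 1 := by
  have hδL : δ < L := lt_trans hδ1 hL
  have hlogδ : Real.log δ < 0 := Real.log_neg hδ0 hδ1
  have hlogL : 0 < Real.log L := Real.log_pos hL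
  have h2δ : (0:ℝ) < 2 * δ := by linarith
  have h2L : (0:ℝ) < 2 * L := by linarith
  -- quadratic piece below δ is antitone
  have quadA : ∀ x y : ℝ, x ≤ y → y ≤ δ → F y ≤ F x := by
    intro x y hxy hyδ
    rw [hF x, hF y, if_pos (le_trans hxy hyδ), if_pos hyδ]
    have key : (y ^ 2 - δ ^ 2) / (2 * δ) - (x ^ 2 - δ ^ 2) / (2 * δ) ≤ y - x := by
      rw [div_sub_div_same, div_le_iff₀ h2δ]
      nlinarith
    nlinarith [mul_nonpos_of_nonneg_of_nonpos (sub_nonneg.2 hxy) (le_of_lt hlogδ)]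
  -- quadratic piece above L is monotone
  have quadM : ∀ x y : ℝ, L ≤ x → x ≤ y → F x ≤ F y := by
    intro x y hLx hxy
    have hFx : F x = (x ^ 2 - L ^ 2) / (2 * L) + x * (Real.log L - 1) + 1 := by
      rw [hF x]
      rw [if_neg (by linarith)]
      by_cases hxL : x ≤ L
      · have : x = L := le_antisymm hxL hLx
        rw [if_pos hxL, this]
        field_simp
        ring
      · rw [if_neg hxL]
    have hFy : F y = (y ^ 2 - L ^ 2) / (2 * L) + y * (Real.log L - 1) + 1 := by
      rw [hF y]
      rw [if_neg (by linarith)]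
      by_cases hyL : y ≤ L
      · have : y = L := le_antisymm hyL (le_trans hLx hxy)
        rw [if_pos hyL, this]
        field_simp
        ring
      · rw [if_neg hyL]
    rw [hFx, hFy]
    have key : (x ^ 2 - L ^ 2) / (2 * L) - (y ^ 2 - L ^ 2) / (2 * L) ≤ x - y := by
      rw [div_sub_div_same, div_le_iff₀ h2L]
      nlinarith [mul_nonpos_of_nonpos_of_nonneg (by linarith : x - y ≤ (0:ℝ)) (by linarith : (0:ℝ) ≤ x + y - 2 * L)]
    nlinarith [mul_nonneg (sub_nonneg.2 hxy) (le_of_lt hlogL)]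
  -- entropy formula on (δ, L]
  have hFent : ∀ x : ℝ, δ < x → x ≤ L → F x = x * (Real.log x - 1) + 1 := by
    intro x h1 h2
    rw [hF x, if_neg (not_le.2 h1), if_pos h2]
  have hFδ : F δ = δ * (Real.log δ - 1) + 1 := by
    rw [hF δ, if_pos le_rfl]
    field_simp
    ring
  -- F antitone on (-∞, 1]
  have lemA : ∀ x y : ℝ, x ≤ y → y ≤ 1 → F y ≤ F x := by
    intro x y hxy hy1
    by_cases hyδ : y ≤ δ
    · exact quadA x y hxy hyδ
    · push_neg at hyδ
      have hFy : F y = y * (Real.log y - 1) + 1 := hFent y hyδ (by linarith)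
      by_cases hxδ : x ≤ δ
      · have h1 : F y ≤ F δ := by
          rw [hFy, hFδ]
          have h' : y * (Real.log y - 1) ≤ δ * (Real.log δ - 1) := ent_anti hδ0 (le_of_lt hδ1)
            (Set.mem_Icc.2 ⟨le_rfl, le_of_lt hδ1⟩)
            (Set.mem_Icc.2 ⟨le_of_lt hyδ, hy1⟩) (le_of_lt hyδ)
          linarith
        have h2 : F δ ≤ F x := quadA x δ hxδ le_rfl
        linarith
      · push_neg at hxδ
        have hFx : F x = x * (Real.log x - 1) + 1 := hFent x hxδ (by linarith)
        rw [hFx, hFy]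
        have h' : y * (Real.log y - 1) ≤ x * (Real.log x - 1) := ent_anti hδ0 (le_of_lt hδ1)
          (Set.mem_Icc.2 ⟨le_of_lt hxδ, le_trans hxy hy1⟩)
          (Set.mem_Icc.2 ⟨le_of_lt hyδ, hy1⟩) hxy
        linarith
  -- F monotone on [1, ∞)
  have lemM : ∀ x y : ℝ, 1 ≤ x → x ≤ y → F x ≤ F y := by
    intro x y h1x hxy
    have hFx : F x = x * (Real.log x - 1) + 1 ∨ L ≤ x := by
      by_cases hxL : x ≤ L
      · exact Or.inl (hFent x (by linarith) hxL)
      · exact Or.inr (le_of_lt (not_le.1 hxL))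
    by_cases hyL : y ≤ L
    · have hx' : F x = x * (Real.log x - 1) + 1 := hFent x (by linarith) (le_trans hxy hyL)
      have hy' : F y = y * (Real.log y - 1) + 1 := hFent y (by linarith) hyL
      rw [hx', hy']
      have h' : x * (Real.log x - 1) ≤ y * (Real.log y - 1) := ent_mono (le_of_lt hL)
        (Set.mem_Icc.2 ⟨h1x, le_trans hxy hyL⟩)
        (Set.mem_Icc.2 ⟨le_trans h1x hxy, hyL⟩) hxy
      linarith
    · push_neg at hyL
      by_cases hxL : x ≤ L
      · have h1 : F x ≤ F L := by
          rw [hFent x (by linarith) hxL, hFent L (by linarith) le_rfl]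
          have h' : x * (Real.log x - 1) ≤ L * (Real.log L - 1) := ent_mono (le_of_lt hL)
            (Set.mem_Icc.2 ⟨h1x, hxL⟩)
            (Set.mem_Icc.2 ⟨le_of_lt hL, le_rfl⟩) hxL
          linarith
        have h2 : F L ≤ F y := quadM L y le_rfl (le_of_lt hyL)
        linarith
      · exact quadM x y (le_of_lt (not_le.1 hxL)) hxy
  have hF1 : F 1 = 0 := by
    rw [hFent 1 hδ1 (le_of_lt hL)]
    simp [Real.log_one]
  have hFnonneg : ∀ x : ℝ, 0 ≤ F x := by
    intro x
    by_cases hx1 : x ≤ 1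
    · have := lemA x 1 hx1 le_rfl; rw [hF1] at this; linarith
    · have := lemM 1 x le_rfl (le_of_lt (not_le.1 hx1)); rw [hF1] at this; linarith
  have hF0 : F 0 ≤ 1 := by
    rw [hF 0, if_pos (le_of_lt hδ0)]
    have : (0 ^ 2 - δ ^ 2) / (2 * δ) ≤ 0 := by
      apply div_nonpos_of_nonpos_of_nonneg <;> nlinarith
    linarith
  -- main case split
  by_cases hs : s ≤ 0
  · have h1 : s ≤ κ * s := by nlinarith
    have h2 : κ * s ≤ 1 := by nlinarith
    have := lemA s (κ * s) h1 h2
    linarith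
  · push_neg at hs
    have hκs : 0 < κ * s := mul_pos hκ0 hs
    by_cases h1 : κ * s ≤ 1
    · have := lemA 0 (κ * s) (le_of_lt hκs) h1
      have := hFnonneg s
      linarith
    · push_neg at h1
      have hκss : κ * s ≤ s := by nlinarith
      have := lemM (κ * s) s (le_of_lt h1) hκss
      linarith
end

section
/- Let ϑ > 1 and c > 0. Then lim_{r→∞} ∫_{(0,1]} ( sup_{x ≥ r−1} e^{−c t x^{2ϑ−1}} (1 + x + t)^ϑ ) dt = 0; that is, for every ε > 0 there exists R ≥ 2 such that for all r ≥ R the (extended-real-valued) integral ∫_{(0,1]} sup_{x ≥ r−1} e^{−c t x^{2ϑ−1}} (1 + x + t)^ϑ dt is less than ε. -/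
open MeasureTheory Filter
open scoped Topology
open scoped ENNReal

private lemma aux_rpow_mul_exp_le {s y α : ℝ} (hs : 0 < s) (hy : 0 ≤ y)
    (hα0 : 0 ≤ α) (hα1 : α ≤ 1) : y ^ α * Real.exp (-(s * y)) ≤ s ^ (-α) := by
  have hsy : 0 ≤ s * y := mul_nonneg hs.le hy
  have h1 : (s * y) ^ α ≤ Real.exp (s * y) := by
    rcases le_total (s * y) 1 with h | h
    · exact le_trans (Real.rpow_le_one hsy h hα0) (Real.one_le_exp hsy)
    · calc (s * y) ^ α ≤ (s * y) ^ (1 : ℝ) :=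
            Real.rpow_le_rpow_of_exponent_le h hα1
        _ = s * y := Real.rpow_one _
        _ ≤ Real.exp (s * y) := by linarith [Real.add_one_le_exp (s * y)]
  have h2 : y ^ α = s ^ (-α) * (s * y) ^ α := by
    rw [Real.mul_rpow hs.le hy, ← mul_assoc, ← Real.rpow_add hs, neg_add_cancel,
      Real.rpow_zero, one_mul]
  have hs' : 0 ≤ s ^ (-α) := Real.rpow_nonneg hs.le _
  calc y ^ α * Real.exp (-(s * y)) = s ^ (-α) * ((s * y) ^ α * Real.exp (-(s * y))) := by
        rw [h2]; ring
    _ ≤ s ^ (-α) * (Real.exp (s * y) * Real.exp (-(s * y))) := by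
        apply mul_le_mul_of_nonneg_left _ hs'
        exact mul_le_mul_of_nonneg_right h1 (Real.exp_nonneg _)
    _ = s ^ (-α) := by rw [← Real.exp_add]; simp

/-- The key analytic estimate of Appendix B of the paper: for `ϑ > 1` and `c > 0`,
`∫_{(0,1]} ( sup_{x ≥ r-1} e^{-c t x^{2ϑ-1}} (1 + x + t)^ϑ ) dt → 0` as `r → ∞`;
that is, for every `ε > 0` there exists `R ≥ 2` such that for all `r ≥ R` the
extended-real-valued integral is `< ε`. -/
theorem tail_factor_tendsto_zero (ϑ c : ℝ) (hϑ : 1 < ϑ) (hc : 0 < c) :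
    ∀ ε : ℝ, 0 < ε → ∃ R : ℝ, 2 ≤ R ∧ ∀ r : ℝ, R ≤ r →
      (∫⁻ t in Set.Ioc (0 : ℝ) 1,
          ⨆ (x : ℝ) (_ : r - 1 ≤ x),
            ENNReal.ofReal (Real.exp (-(c * t * x ^ (2 * ϑ - 1))) * (1 + x + t) ^ ϑ)) <
        ENNReal.ofReal ε := by
  intro ε hε
  set α := ϑ / (2 * ϑ - 1) with hα_def
  have h2ϑ : (1 : ℝ) < 2 * ϑ - 1 := by linarith
  have hα0 : 0 < α := div_pos (by linarith) (by linarith)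
  have hα1 : α < 1 := (div_lt_one (by linarith)).2 (by linarith)
  have hαmul : (2 * ϑ - 1) * α = ϑ := by
    rw [hα_def]; field_simp
  set K := (3 : ℝ) ^ ϑ * (c / 2) ^ (-α) with hK_def
  have hK0 : 0 < K := by
    apply mul_pos (Real.rpow_pos_of_pos (by norm_num) _) (Real.rpow_pos_of_pos (by linarith) _)
  -- choice of δ
  have hbase : 0 < ε * (1 - α) / (4 * K) :=
    div_pos (mul_pos hε (by linarith)) (by linarith)
  set δ := min 1 ((ε * (1 - α) / (4 * K)) ^ (1 / (1 - α))) with hδ_def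
  have hδ0 : 0 < δ := lt_min one_pos (Real.rpow_pos_of_pos hbase _)
  have hδ1 : δ ≤ 1 := min_le_left _ _
  have hδbound : K * (δ ^ (1 - α) / (1 - α)) ≤ ε / 4 := by
    have h1 : δ ^ (1 - α) ≤ ε * (1 - α) / (4 * K) := by
      calc δ ^ (1 - α) ≤ ((ε * (1 - α) / (4 * K)) ^ (1 / (1 - α))) ^ (1 - α) :=
            Real.rpow_le_rpow hδ0.le (min_le_right _ _) (by linarith)
        _ = ε * (1 - α) / (4 * K) := by
            rw [← Real.rpow_mul hbase.le, one_div,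
              inv_mul_cancel₀ (by linarith), Real.rpow_one]
    have h2 : δ ^ (1 - α) / (1 - α) ≤ ε / (4 * K) := by
      rw [div_le_div_iff₀ (by linarith) (by positivity)]
      calc δ ^ (1 - α) * (4 * K) ≤ (ε * (1 - α) / (4 * K)) * (4 * K) := by
            apply mul_le_mul_of_nonneg_right h1 (by linarith)
        _ = ε * (1 - α) := by field_simp
    calc K * (δ ^ (1 - α) / (1 - α)) ≤ K * (ε / (4 * K)) :=
          mul_le_mul_of_nonneg_left h2 hK0.le
      _ = ε / 4 := by field_simp
  -- choice of R
  have hlim : Tendsto (fun r : ℝ =>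
      K * δ ^ (-α) * Real.exp (-(c / 2 * δ * (r - 1) ^ (2 * ϑ - 1)))) atTop (𝓝 0) := by
    have h1 : Tendsto (fun r : ℝ => r - 1) atTop atTop :=
      tendsto_atTop_add_const_right _ (-1) tendsto_id
    have h2 : Tendsto (fun y : ℝ => y ^ (2 * ϑ - 1)) atTop atTop :=
      tendsto_rpow_atTop (by linarith)
    have h3 : Tendsto (fun z : ℝ => c / 2 * δ * z) atTop atTop :=
      Tendsto.const_mul_atTop (mul_pos (by linarith) hδ0 :
        0 < c / 2 * δ) tendsto_id
    have h4 : Tendsto (fun w : ℝ => Real.exp (-w)) atTop (𝓝 0) :=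
      Real.tendsto_exp_neg_atTop_nhds_zero
    have := ((h4.comp h3).comp (h2.comp h1)).const_mul (K * δ ^ (-α))
    simpa [Function.comp, mul_zero] using this
  obtain ⟨R₀, hR₀⟩ := eventually_atTop.1
    (hlim.eventually_lt_const (show (0:ℝ) < ε / 4 by linarith))
  refine ⟨max 2 R₀, le_max_left _ _, fun r hr => ?_⟩
  have hr2 : (2 : ℝ) ≤ r := le_trans (le_max_left _ _) hr
  have hrB : K * δ ^ (-α) * Real.exp (-(c / 2 * δ * (r - 1) ^ (2 * ϑ - 1))) < ε / 4 :=
    hR₀ r (le_trans (le_max_right _ _) hr)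
  set M := (r - 1) ^ (2 * ϑ - 1) with hM_def
  have hM0 : 0 ≤ M := Real.rpow_nonneg (by linarith) _
  -- pointwise bound
  have hpt : ∀ t ∈ Set.Ioc (0 : ℝ) 1,
      (⨆ (x : ℝ) (_ : r - 1 ≤ x),
        ENNReal.ofReal (Real.exp (-(c * t * x ^ (2 * ϑ - 1))) * (1 + x + t) ^ ϑ))
      ≤ ENNReal.ofReal (K * t ^ (-α) * Real.exp (-(c / 2 * t * M))) := by
    intro t ht
    have ht0 : 0 < t := ht.1
    have ht1 : t ≤ 1 := ht.2
    apply iSup₂_le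
    intro x hx
    apply ENNReal.ofReal_le_ofReal
    have hx1 : 1 ≤ x := by linarith
    set y := x ^ (2 * ϑ - 1) with hy_def
    have hy0 : 0 ≤ y := Real.rpow_nonneg (by linarith) _
    have hyM : M ≤ y := Real.rpow_le_rpow (by linarith) hx (by linarith)
    have hxϑ : x ^ ϑ = y ^ α := by
      rw [hy_def, ← Real.rpow_mul (by linarith : (0:ℝ) ≤ x), hαmul]
    have step1 : (1 + x + t) ^ ϑ ≤ 3 ^ ϑ * x ^ ϑ := by
      calc (1 + x + t) ^ ϑ ≤ (3 * x) ^ ϑ :=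
            Real.rpow_le_rpow (by linarith) (by linarith) (by linarith)
        _ = 3 ^ ϑ * x ^ ϑ := Real.mul_rpow (by norm_num) (by linarith)
    have step3 : y ^ α * Real.exp (-(c / 2 * t * y)) ≤ (c / 2 * t) ^ (-α) := by
      have := aux_rpow_mul_exp_le (s := c / 2 * t) (y := y) (α := α)
        (mul_pos (by linarith) ht0) hy0 hα0.le hα1.le
      convert this using 3
    have step4 : Real.exp (-(c / 2 * t * y)) ≤ Real.exp (-(c / 2 * t * M)) := by
      apply Real.exp_le_exp.2
      have : c / 2 * t * M ≤ c / 2 * t * y :=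
        mul_le_mul_of_nonneg_left hyM (mul_nonneg (by linarith) ht0.le)
      linarith
    have step5 : (c / 2 * t) ^ (-α) = (c / 2) ^ (-α) * t ^ (-α) :=
      Real.mul_rpow (by linarith) ht0.le
    have hsplit : Real.exp (-(c * t * y)) =
        Real.exp (-(c / 2 * t * y)) * Real.exp (-(c / 2 * t * y)) := by
      rw [← Real.exp_add]; ring_nf
    calc Real.exp (-(c * t * x ^ (2 * ϑ - 1))) * (1 + x + t) ^ ϑ
        ≤ Real.exp (-(c * t * y)) * (3 ^ ϑ * x ^ ϑ) :=
          mul_le_mul_of_nonneg_left step1 (Real.exp_nonneg _)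
      _ = 3 ^ ϑ * (y ^ α * Real.exp (-(c / 2 * t * y))) * Real.exp (-(c / 2 * t * y)) := by
          rw [hxϑ, hsplit]; ring
      _ ≤ 3 ^ ϑ * (c / 2 * t) ^ (-α) * Real.exp (-(c / 2 * t * M)) :=
          mul_le_mul
            (mul_le_mul_of_nonneg_left step3 (Real.rpow_nonneg (by norm_num) _))
            step4 (Real.exp_nonneg _)
            (mul_nonneg (Real.rpow_nonneg (by norm_num) _)
              (Real.rpow_nonneg (mul_nonneg (by linarith) ht0.le) _))
      _ = K * t ^ (-α) * Real.exp (-(c / 2 * t * M)) := by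
          rw [step5, hK_def]; ring
  -- split the integral
  have hsplit2 : (∫⁻ t in Set.Ioc (0 : ℝ) 1,
      ENNReal.ofReal (K * t ^ (-α) * Real.exp (-(c / 2 * t * M))))
      = (∫⁻ t in Set.Ioc (0 : ℝ) δ,
          ENNReal.ofReal (K * t ^ (-α) * Real.exp (-(c / 2 * t * M))))
      + (∫⁻ t in Set.Ioc δ 1,
          ENNReal.ofReal (K * t ^ (-α) * Real.exp (-(c / 2 * t * M)))) := by
    rw [← lintegral_union measurableSet_Ioc (Set.Ioc_disjoint_Ioc_of_le le_rfl),
      Set.Ioc_union_Ioc_eq_Ioc hδ0.le hδ1]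
  have part1 : (∫⁻ t in Set.Ioc (0 : ℝ) δ,
      ENNReal.ofReal (K * t ^ (-α) * Real.exp (-(c / 2 * t * M))))
      ≤ ENNReal.ofReal (ε / 4) := by
    have mono1 : ∀ t ∈ Set.Ioc (0 : ℝ) δ,
        ENNReal.ofReal (K * t ^ (-α) * Real.exp (-(c / 2 * t * M)))
        ≤ ENNReal.ofReal (K * t ^ (-α)) := by
      intro t ht
      apply ENNReal.ofReal_le_ofReal
      have he : Real.exp (-(c / 2 * t * M)) ≤ 1 := by
        rw [← Real.exp_zero]
        apply Real.exp_le_exp.2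
        have : 0 ≤ c / 2 * t * M :=
          mul_nonneg (mul_nonneg (by linarith) ht.1.le) hM0
        linarith
      have hnn : 0 ≤ K * t ^ (-α) :=
        mul_nonneg hK0.le (Real.rpow_nonneg ht.1.le _)
      calc K * t ^ (-α) * Real.exp (-(c / 2 * t * M)) ≤ K * t ^ (-α) * 1 :=
            mul_le_mul_of_nonneg_left he hnn
        _ = K * t ^ (-α) := mul_one _
    have hint : IntegrableOn (fun t : ℝ => K * t ^ (-α)) (Set.Ioc 0 δ) := by
      have h := (intervalIntegral.intervalIntegrable_rpow'
        (a := 0) (b := δ) (show (-1 : ℝ) < -α by linarith)).const_mul K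
      rw [intervalIntegrable_iff, Set.uIoc_of_le hδ0.le] at h
      exact h
    have hnn2 : 0 ≤ᵐ[volume.restrict (Set.Ioc (0:ℝ) δ)] fun t : ℝ => K * t ^ (-α) := by
      rw [EventuallyLE, ae_restrict_iff' measurableSet_Ioc]
      apply ae_of_all
      intro t ht
      exact mul_nonneg hK0.le (Real.rpow_nonneg ht.1.le _)
    have heq : (∫⁻ t in Set.Ioc (0 : ℝ) δ, ENNReal.ofReal (K * t ^ (-α)))
        = ENNReal.ofReal (∫ t in Set.Ioc (0 : ℝ) δ, K * t ^ (-α)) :=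
      (MeasureTheory.ofReal_integral_eq_lintegral_ofReal hint hnn2).symm
    have hval : (∫ t in Set.Ioc (0 : ℝ) δ, K * t ^ (-α)) = K * (δ ^ (1 - α) / (1 - α)) := by
      rw [← intervalIntegral.integral_of_le hδ0.le, intervalIntegral.integral_const_mul,
        integral_rpow (Or.inl (by linarith : (-1:ℝ) < -α))]
      rw [Real.zero_rpow (by linarith : -α + 1 ≠ 0),
        show -α + 1 = 1 - α by ring]
      ring
    calc (∫⁻ t in Set.Ioc (0 : ℝ) δ,
          ENNReal.ofReal (K * t ^ (-α) * Real.exp (-(c / 2 * t * M))))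
        ≤ ∫⁻ t in Set.Ioc (0 : ℝ) δ, ENNReal.ofReal (K * t ^ (-α)) :=
          setLIntegral_mono' measurableSet_Ioc mono1
      _ = ENNReal.ofReal (K * (δ ^ (1 - α) / (1 - α))) := by rw [heq, hval]
      _ ≤ ENNReal.ofReal (ε / 4) := ENNReal.ofReal_le_ofReal hδbound
  have part2 : (∫⁻ t in Set.Ioc δ 1,
      ENNReal.ofReal (K * t ^ (-α) * Real.exp (-(c / 2 * t * M))))
      ≤ ENNReal.ofReal (ε / 4) := by
    set B := K * δ ^ (-α) * Real.exp (-(c / 2 * δ * M)) with hB_def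
    have mono2 : ∀ t ∈ Set.Ioc δ 1,
        ENNReal.ofReal (K * t ^ (-α) * Real.exp (-(c / 2 * t * M)))
        ≤ ENNReal.ofReal B := by
      intro t ht
      have htδ : δ ≤ t := ht.1.le
      have ht0 : 0 < t := lt_of_lt_of_le hδ0 htδ
      apply ENNReal.ofReal_le_ofReal
      have h1 : t ^ (-α) ≤ δ ^ (-α) :=
        Real.rpow_le_rpow_of_nonpos hδ0 htδ (by linarith)
      have h2 : Real.exp (-(c / 2 * t * M)) ≤ Real.exp (-(c / 2 * δ * M)) := by
        apply Real.exp_le_exp.2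
        have : c / 2 * δ * M ≤ c / 2 * t * M :=
          mul_le_mul_of_nonneg_right (by nlinarith) hM0
        linarith
      calc K * t ^ (-α) * Real.exp (-(c / 2 * t * M))
          ≤ K * δ ^ (-α) * Real.exp (-(c / 2 * δ * M)) := by
            apply mul_le_mul _ h2 (Real.exp_nonneg _) (by positivity)
            exact mul_le_mul_of_nonneg_left h1 hK0.le
        _ = B := hB_def.symm
    calc (∫⁻ t in Set.Ioc δ 1,
          ENNReal.ofReal (K * t ^ (-α) * Real.exp (-(c / 2 * t * M))))
        ≤ ∫⁻ _ in Set.Ioc δ 1, ENNReal.ofReal B :=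
          setLIntegral_mono' measurableSet_Ioc mono2
      _ = ENNReal.ofReal B * volume (Set.Ioc δ 1) := setLIntegral_const _ _
      _ ≤ ENNReal.ofReal B * 1 := by
          apply mul_le_mul_right _ _
          rw [Real.volume_Ioc]
          exact ENNReal.ofReal_le_one.2 (by linarith)
      _ = ENNReal.ofReal B := mul_one _
      _ ≤ ENNReal.ofReal (ε / 4) := ENNReal.ofReal_le_ofReal hrB.le
  calc (∫⁻ t in Set.Ioc (0 : ℝ) 1,
        ⨆ (x : ℝ) (_ : r - 1 ≤ x),
          ENNReal.ofReal (Real.exp (-(c * t * x ^ (2 * ϑ - 1))) * (1 + x + t) ^ ϑ))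
      ≤ ∫⁻ t in Set.Ioc (0 : ℝ) 1,
          ENNReal.ofReal (K * t ^ (-α) * Real.exp (-(c / 2 * t * M))) :=
        setLIntegral_mono' measurableSet_Ioc hpt
    _ ≤ ENNReal.ofReal (ε / 4) + ENNReal.ofReal (ε / 4) := by
        rw [hsplit2]; exact add_le_add part1 part2
    _ = ENNReal.ofReal (ε / 2) := by
        rw [← ENNReal.ofReal_add (by linarith) (by linarith),
          show ε / 4 + ε / 4 = ε / 2 by ring]
    _ < ENNReal.ofReal ε := (ENNReal.ofReal_lt_ofReal_iff hε).2 (by linarith)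
end
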